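/- arXiv:2103.08625 — 2 statements merged into one kernel-verified Lean document; each statement's English description precedes it below -/
import Mathlib

section
/- Let G = (V,E) be a finite digraph that is a disjoint union of directed cycles, let ℓ be the length of a shortest cycle in G, and suppose p is a prime dividing ℓ. Then G has no cyclic polymorphism of arity p. Consequently, if a finite disjoint union of directed cycles has cyclic polymorphisms of every prime arity, it contains a loop (a cycle of length 1). -/
/-- Let `(V, E)` be a finite disjoint union of directed cycles (given by a
permutation `σ` with edges `u → σ u`), and let `ℓ` be the length of a shortest
cycle. If a prime `p` divides `ℓ`, then there is no `p`-ary cyclic polymorphism.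
Consequently, if cyclic polymorphisms of every prime arity exist, then `ℓ = 1`
and the digraph contains a loop. -/
theorem stmt_11 {V : Type*} [Finite V] (σ : Equiv.Perm V)
    (E : V → V → Prop) (hE : ∀ u v, E u v ↔ σ u = v)
    (ℓ : ℕ) (hℓ : 1 ≤ ℓ) (hex : ∃ a, (⇑σ)^[ℓ] a = a)
    (hmin : ∀ m, 1 ≤ m → (∃ a, (⇑σ)^[m] a = a) → ℓ ≤ m) :
    (∀ p : ℕ, ∀ hp : p.Prime, p ∣ ℓ →
      ¬ ∃ f : (Fin p → V) → V,
        (∀ u v : Fin p → V, (∀ i, E (u i) (v i)) → E (f u) (f v)) ∧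
        (∀ x : Fin p → V,
          f x = f (fun i => x ⟨(i.val + 1) % p, Nat.mod_lt _ hp.pos⟩))) ∧
    ((∀ q : ℕ, ∀ hq : q.Prime,
        ∃ f : (Fin q → V) → V,
          (∀ u v : Fin q → V, (∀ i, E (u i) (v i)) → E (f u) (f v)) ∧
          (∀ x : Fin q → V,
            f x = f (fun i => x ⟨(i.val + 1) % q, Nat.mod_lt _ hq.pos⟩))) →
      ℓ = 1 ∧ ∃ a, E a a) := by
  have main : ∀ p : ℕ, ∀ hp : p.Prime, p ∣ ℓ →
      ¬ ∃ f : (Fin p → V) → V,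
        (∀ u v : Fin p → V, (∀ i, E (u i) (v i)) → E (f u) (f v)) ∧
        (∀ x : Fin p → V,
          f x = f (fun i => x ⟨(i.val + 1) % p, Nat.mod_lt _ hp.pos⟩)) := by
    rintro p hp hdvd ⟨f, hpoly, hcyc⟩
    obtain ⟨k, hk⟩ := hdvd
    obtain ⟨a, ha⟩ := hex
    have hp2 := hp.two_le
    have hk1 : 1 ≤ k := by
      rcases Nat.eq_zero_or_pos k with h | h
      · subst h; simp at hk; omega
      · exact h
    set g : ℕ → V := fun j => f (fun i => (⇑σ)^[i.val * k + j] a) with hg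
    have hstep : ∀ j, g (j + 1) = σ (g j) := by
      intro j
      have h := hpoly (fun i => (⇑σ)^[i.val * k + j] a)
        (fun i => (⇑σ)^[i.val * k + (j + 1)] a) ?_
      · rw [hE] at h; exact h.symm
      · intro i
        rw [hE, ← Function.iterate_succ_apply' σ]
        rfl
    have hiter : ∀ j, g j = (⇑σ)^[j] (g 0) := by
      intro j; induction j with
      | zero => rfl
      | succ n ih => rw [hstep, ih, Function.iterate_succ_apply']
    have hgk : g k = g 0 := by
      have h := hcyc (fun i => (⇑σ)^[i.val * k + 0] a)
      have heq : (fun i : Fin p => (⇑σ)^[(((i : ℕ) + 1) % p) * k + 0] a)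
          = fun i : Fin p => (⇑σ)^[(i : ℕ) * k + k] a := by
        funext i
        rcases Nat.lt_or_ge ((i : ℕ) + 1) p with h' | h'
        · rw [Nat.mod_eq_of_lt h']; ring_nf
        · have hip : (i : ℕ) + 1 = p := by have := i.isLt; omega
          rw [hip, Nat.mod_self]
          have : (i : ℕ) * k + k = ℓ := by rw [hk]; nlinarith [hip]
          rw [this, ha]
          simp
      rw [heq] at h
      exact h.symm
    have hfix : (⇑σ)^[k] (g 0) = g 0 := by rw [← hiter, hgk]
    have hle := hmin k hk1 ⟨g 0, hfix⟩
    nlinarith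
  refine ⟨main, fun hall => ?_⟩
  have hℓ1 : ℓ = 1 := by
    by_contra h
    have hp := Nat.minFac_prime h
    exact main ℓ.minFac hp (Nat.minFac_dvd ℓ) (hall _ hp)
  refine ⟨hℓ1, ?_⟩
  obtain ⟨a, ha⟩ := hex
  exact ⟨a, (hE a a).2 (by simpa [hℓ1] using ha)⟩
end

section
/- The digraphs T_3, C_2, C_3, C_5, ... (directed cycles of prime length together with the transitive tournament on 3 vertices) form an antichain with respect to satisfaction of the minor conditions {Σ_M, Σ_2, Σ_3, Σ_5, ...}: for each prime p, C_p satisfies Σ_M and Σ_q for all primes q ≠ p but not Σ_p; and T_3 satisfies Σ_q for all primes q but not Σ_M. Hence for any two distinct digraphs H, H' in this list, there is a minor condition satisfied by the polymorphisms of H but not by those of H'. -/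
/-- Edge relation of the directed cycle `C_n` on `ZMod n`. -/
def Cedge (n : ℕ) (u v : ZMod n) : Prop := u + 1 = v

/-- Edge relation of the transitive tournament `T_3`. -/
def T3edge (u v : Fin 3) : Prop := u < v

/-- The digraph `(V, E)` has a cyclic polymorphism of arity `p > 0` (condition `Σ_p`). -/
def HasCyclicPoly {V : Type*} (E : V → V → Prop) (p : ℕ) (hp : 0 < p) : Prop :=
  ∃ f : (Fin p → V) → V,
    (∀ u v : Fin p → V, (∀ i, E (u i) (v i)) → E (f u) (f v)) ∧
    (∀ x : Fin p → V, f x = f (fun i => x ⟨(i.val + 1) % p, Nat.mod_lt _ hp⟩))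

/-- The digraph `(V, E)` has an idempotent Maltsev polymorphism (condition `Σ_M`). -/
def HasMaltsevPoly {V : Type*} (E : V → V → Prop) : Prop :=
  ∃ f : V → V → V → V,
    (∀ u₁ u₂ u₃ v₁ v₂ v₃ : V, E u₁ v₁ → E u₂ v₂ → E u₃ v₃ →
      E (f u₁ u₂ u₃) (f v₁ v₂ v₃)) ∧
    (∀ x, f x x x = x) ∧ (∀ x y, f y y x = x ∧ f x y y = x)

lemma mk_succ' {n : ℕ} (i : Fin (n+1)) (h : (i.val + 1) % (n+1) < n + 1) :
    (⟨(i.val + 1) % (n+1), h⟩ : Fin (n+1)) = i + 1 := by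
  apply Fin.ext
  simp [Fin.val_add, Fin.val_one', Nat.add_mod, Nat.mod_eq_of_lt i.isLt]

/-- cyclic shift of arity `n+1` for monotone sup on a linear order. -/
lemma sup'_shift {α : Type*} [LinearOrder α] {n : ℕ} (y : Fin (n+1) → α) :
    (Finset.univ.sup' ⟨0, Finset.mem_univ 0⟩ fun i => y (i + 1)) =
      Finset.univ.sup' ⟨0, Finset.mem_univ 0⟩ y := by
  apply le_antisymm
  · exact Finset.sup'_le _ _ fun i _ => Finset.le_sup' y (Finset.mem_univ (i + 1))
  · refine Finset.sup'_le _ _ fun i _ => ?_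
    have h : y i = y ((i - 1) + 1) := by rw [sub_add_cancel]
    rw [h]
    exact Finset.le_sup' (fun i => y (i + 1)) (Finset.mem_univ (i - 1))

/-- The digraphs `T_3, C_2, C_3, C_5, ...` form an antichain with respect to the
minor conditions `Σ_M, Σ_2, Σ_3, Σ_5, ...`: each `C_p` satisfies `Σ_M` and `Σ_q`
for primes `q ≠ p` but not `Σ_p`, and `T_3` satisfies every `Σ_q` but not `Σ_M`. -/
theorem stmt_19 :
    (∀ p : ℕ, ∀ hp : p.Prime,
      HasMaltsevPoly (Cedge p) ∧
      (∀ q : ℕ, ∀ hq : q.Prime, q ≠ p → HasCyclicPoly (Cedge p) q hq.pos) ∧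
      ¬ HasCyclicPoly (Cedge p) p hp.pos) ∧
    ((∀ q : ℕ, ∀ hq : q.Prime, HasCyclicPoly T3edge q hq.pos) ∧
     ¬ HasMaltsevPoly T3edge) := by
  constructor
  · intro p hp
    haveI := Fact.mk hp
    refine ⟨?_, ?_, ?_⟩
    · -- Maltsev polymorphism `x - y + z` for `C_p`
      refine ⟨fun x y z => x - y + z, ?_, ?_, ?_⟩
      · intro u₁ u₂ u₃ v₁ v₂ v₃ h₁ h₂ h₃
        simp only [Cedge] at *
        rw [← h₁, ← h₂, ← h₃]
        ring
      · intro x; ring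
      · intro x y; constructor <;> ring
    · -- cyclic polymorphism of arity `q ≠ p` for `C_p`
      intro q hq hne
      have hq0 : (q : ZMod p) ≠ 0 := by
        rw [Ne, ZMod.natCast_eq_zero_iff, Nat.prime_dvd_prime_iff_eq hp hq]
        exact fun h => hne h.symm
      obtain ⟨n, rfl⟩ : ∃ n, q = n + 1 := ⟨q - 1, (Nat.succ_pred_eq_of_pos hq.pos).symm⟩
      refine ⟨fun x => (↑(n+1) : ZMod p)⁻¹ * ∑ i, x i, ?_, ?_⟩
      · intro u v h
        simp only [Cedge] at *
        have hsum : ∑ i, v i = (∑ i, u i) + (↑(n+1) : ZMod p) := by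
          simp only [← h]
          rw [Finset.sum_add_distrib]
          simp [Finset.card_univ]
        rw [hsum, mul_add, inv_mul_cancel₀ hq0]
      · intro x
        dsimp only
        have h1 : ∑ i : Fin (n+1), x ⟨(i.val + 1) % (n+1), Nat.mod_lt _ hq.pos⟩
            = ∑ i, x i := by
          simp only [mk_succ']
          exact Equiv.sum_comp (Equiv.addRight (1 : Fin (n+1))) x
        rw [h1]
    · -- `C_p` has no cyclic polymorphism of arity `p`
      rintro ⟨f, hE, hcyc⟩
      set x : Fin p → ZMod p := fun i => (i.val : ZMod p) with hx
      have hedge : ∀ i : Fin p,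
          Cedge p (x i) (x ⟨(i.val + 1) % p, Nat.mod_lt _ hp.pos⟩) := by
        intro i
        simp only [Cedge, hx]
        push_cast [ZMod.natCast_mod]
        ring
      have h1 := hE x _ hedge
      simp only [Cedge] at h1
      rw [← hcyc x] at h1
      have : (1 : ZMod p) = 0 := by
        exact add_left_cancel (a := f x) (b := 1) (c := 0) (by simp [h1])
      exact one_ne_zero this
  · constructor
    · -- `T_3` has cyclic polymorphisms of every prime arity (max)
      intro q hq
      obtain ⟨n, rfl⟩ : ∃ n, q = n + 1 := ⟨q - 1, (Nat.succ_pred_eq_of_pos hq.pos).symm⟩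
      refine ⟨fun x => Finset.univ.sup' ⟨0, Finset.mem_univ 0⟩ x, ?_, ?_⟩
      · intro u v h
        simp only [T3edge] at *
        obtain ⟨i₀, _, hi₀⟩ := Finset.exists_mem_eq_sup' (⟨0, Finset.mem_univ 0⟩ :
          (Finset.univ : Finset (Fin (n+1))).Nonempty) u
        rw [hi₀]
        exact lt_of_lt_of_le (h i₀) (Finset.le_sup' v (Finset.mem_univ i₀))
      · intro x
        dsimp only
        have : (fun i : Fin (n+1) => x ⟨(i.val + 1) % (n+1), Nat.mod_lt _ hq.pos⟩)
            = fun i => x (i + 1) := by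
          funext i; rw [mk_succ']
        rw [this, sup'_shift]
    · -- `T_3` has no Maltsev polymorphism
      rintro ⟨f, hE, _, hm⟩
      have h := hE 0 0 1 1 2 2 (show (0:Fin 3) < 1 by decide)
        (show (0:Fin 3) < 2 by decide) (show (1:Fin 3) < 2 by decide)
      rw [(hm 1 0).1, (hm 1 2).2] at h
      exact lt_irrefl _ h
end
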